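/- arXiv:1911.00970 — 3 statements merged into one kernel-verified Lean document; each statement's English description precedes it below -/
import Mathlib

section
/- Let F be a field, L a Lie algebra over F, n ≥ 1 an integer, z ∈ L, e : ℕ → L a sequence of elements with e_{i+1} = ⁅e_i, z⁆ for all i ≥ n, and β : ℕ → F scalars with ⁅e_i, e_n⁆ = β_i • e_{i+n} for all i ≥ n. Then for all integers a, b with a ≥ n and b ≥ n, ⁅e_a, e_b⁆ = (Σ_{i=0}^{b−n} (−1)^i C(b−n, i) β_{a+i}) • e_{a+b}, where C(b−n, i) denotes the binomial coefficient interpreted in F. -/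
lemma key_sum {F : Type*} [Field F] (m : ℕ) (f : ℕ → F) :
    ∑ i ∈ Finset.range (m + 2), (-1 : F) ^ i * ((m + 1).choose i : F) * f i
      = ∑ i ∈ Finset.range (m + 1), (-1 : F) ^ i * (m.choose i : F) * f i
        - ∑ i ∈ Finset.range (m + 1), (-1 : F) ^ i * (m.choose i : F) * f (i + 1) := by
  rw [Finset.sum_range_succ' _ (m + 1)]
  have h2 : ∑ i ∈ Finset.range (m + 1), (-1 : F) ^ i * (m.choose i : F) * f i
      = (∑ i ∈ Finset.range m, (-1 : F) ^ (i+1) * (m.choose (i+1) : F) * f (i+1))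
        + (-1 : F) ^ 0 * (m.choose 0 : F) * f 0 := by
    rw [← Finset.sum_range_succ' (fun i => (-1 : F) ^ i * (m.choose i : F) * f i) m]
  rw [h2]
  have h3 : ∑ i ∈ Finset.range (m + 1), (-1 : F) ^ (i+1) * ((m+1).choose (i+1) : F) * f (i+1)
      = ∑ i ∈ Finset.range (m + 1), ((-1 : F) ^ (i+1) * (m.choose i : F) * f (i+1)
        + (-1 : F) ^ (i+1) * (m.choose (i+1) : F) * f (i+1)) := by
    refine Finset.sum_congr rfl fun i _ => ?_
    rw [Nat.choose_succ_succ]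
    push_cast
    ring
  rw [h3, Finset.sum_add_distrib,
    Finset.sum_range_succ (fun x => (-1 : F) ^ (x+1) * (m.choose (x+1) : F) * f (x+1)) m]
  have h4 : ∑ x ∈ Finset.range (m + 1), (-1 : F) ^ (x+1) * (m.choose x : F) * f (x+1)
      = - ∑ x ∈ Finset.range (m + 1), (-1 : F) ^ x * (m.choose x : F) * f (x+1) := by
    rw [← Finset.sum_neg_distrib]
    exact Finset.sum_congr rfl fun i _ => by ring
  rw [h4]
  simp [Nat.choose_succ_self]
  ring

/-- **Lemma (expansion of `[e_a, e_b]`).**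
Let `L` be a Lie algebra over a field `F`, `n ≥ 1`, `z ∈ L`, `e : ℕ → L` with
`e (i+1) = ⁅e i, z⁆` for `i ≥ n`, and `β : ℕ → F` with `⁅e i, e n⁆ = β i • e (i+n)`
for `i ≥ n`.  Then for all `a, b ≥ n`:
`⁅e a, e b⁆ = (Σ_{i=0}^{b−n} (−1)^i C(b−n, i) β (a+i)) • e (a+b)`. -/
theorem bracket_expansion
    {F : Type*} [Field F]
    {L : Type*} [LieRing L] [LieAlgebra F L]
    (n : ℕ) (hn : 1 ≤ n) (z : L) (e : ℕ → L)
    (hrec : ∀ i : ℕ, n ≤ i → e (i + 1) = ⁅e i, z⁆)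
    (β : ℕ → F)
    (hβ : ∀ i : ℕ, n ≤ i → ⁅e i, e n⁆ = β i • e (i + n))
    (a b : ℕ) (ha : n ≤ a) (hb : n ≤ b) :
    ⁅e a, e b⁆ =
      (∑ i ∈ Finset.range (b - n + 1),
        (-1 : F) ^ i * ((b - n).choose i : F) * β (a + i)) • e (a + b) := by
  induction b, hb using Nat.le_induction generalizing a with
  | base =>
    simp only [Nat.sub_self, zero_add, Finset.sum_range_one, pow_zero, Nat.choose_self,
      Nat.cast_one, one_mul, Nat.add_zero, mul_one]
    exact hβ a ha
  | succ b hb ih =>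
    have hab : n ≤ a + b := le_trans ha (Nat.le_add_right a b)
    rw [hrec b hb, leibniz_lie, ih a ha, ← hrec a ha, ← lie_skew (e b) (e (a + 1)),
      ih (a + 1) (le_trans ha (Nat.le_succ a)), smul_lie, ← hrec (a + b) hab]
    have hm : b + 1 - n = (b - n) + 1 := by omega
    rw [hm, ← sub_eq_add_neg, show a + 1 + b = a + b + 1 by ring, ← sub_smul,
      show a + b + 1 = a + (b + 1) by ring]
    congr 1
    have hk := key_sum (b - n) (fun i => β (a + i))
    rw [show b - n + 2 = b - n + 1 + 1 by ring] at hk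
    rw [hk]
    congr 1
    exact Finset.sum_congr rfl fun i _ => by rw [show a + 1 + i = a + (i + 1) by ring]
end

section
/- Let F be a field and let L = ⊕_{i≥1} L_i be an algebra of type 1 over F, that is, an ℕ-graded Lie algebra with dim L_1 = 2, dim L_i = 1 for all i > 1, and ⁅L_i, L_1⁆ = L_{i+1} for all i ≥ 1. Let y ∈ L_1 satisfy ⁅u, y⁆ = 0 for all u ∈ L_2. Then ⁅⁅u, y⁆, y⁆ = 0 for every i ≥ 1 and every u ∈ L_i. -/
/-- **Lemma (sandwich property in algebras of type 1).**
Let `L = ⊕_{i≥1} L_i` be an algebra of type `1` over a field `F`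
(an ℕ-graded Lie algebra with `dim L_1 = 2`, `dim L_i = 1` for `i > 1`, and
`⁅L_i, L_1⁆ = L_{i+1}` for `i ≥ 1`), and let `y ∈ L_1` with `⁅L_2, y⁆ = 0`.
Then `⁅⁅u, y⁆, y⁆ = 0` for every `u ∈ L_i`, `i ≥ 1`. -/
theorem type_one_sandwich
    {F : Type*} [Field F]
    {L : Type*} [LieRing L] [LieAlgebra F L]
    (Lc : ℕ → Submodule F L)
    (hinternal : DirectSum.IsInternal Lc)
    (h0 : Lc 0 = ⊥)
    (hgrade : ∀ i j : ℕ, ∀ x ∈ Lc i, ∀ y ∈ Lc j, ⁅x, y⁆ ∈ Lc (i + j))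
    (hdim1 : Module.finrank F (Lc 1) = 2)
    (hdim : ∀ i : ℕ, 1 < i → Module.finrank F (Lc i) = 1)
    (hgen : ∀ i : ℕ, 1 ≤ i →
      Lc (i + 1) = Submodule.span F {w : L | ∃ x ∈ Lc i, ∃ u ∈ Lc 1, w = ⁅x, u⁆})
    (y : L) (hy : y ∈ Lc 1)
    (hy2 : ∀ u ∈ Lc 2, ⁅u, y⁆ = 0) :
    ∀ i : ℕ, 1 ≤ i → ∀ u ∈ Lc i, ⁅⁅u, y⁆, y⁆ = 0 := by
  -- key: for every `i ≥ 2`, `ad y` vanishes on `Lc i` or on `Lc (i+1)`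
  have key : ∀ i : ℕ, 2 ≤ i →
      (∀ u ∈ Lc i, ⁅u, y⁆ = 0) ∨ (∀ u ∈ Lc (i + 1), ⁅u, y⁆ = 0) := by
    intro i hi
    induction i, hi using Nat.le_induction with
    | base => exact Or.inl hy2
    | succ i hi ih =>
      by_cases hQ : ∀ u ∈ Lc (i + 1), ⁅u, y⁆ = 0
      · exact Or.inl hQ
      · -- then `ad y` vanishes on `Lc i`
        have hQi : ∀ u ∈ Lc i, ⁅u, y⁆ = 0 := ih.resolve_right hQ
        right
        -- find a generator bracket with nonzero image under `ad y`
        have hex : ∃ e ∈ Lc i, ∃ v ∈ Lc 1, ⁅⁅e, v⁆, y⁆ ≠ 0 := by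
          by_contra hcon
          push_neg at hcon
          apply hQ
          intro u hu
          rw [hgen i (by omega)] at hu
          induction hu using Submodule.span_induction with
          | mem w hw =>
            obtain ⟨e, he, v, hv, rfl⟩ := hw
            exact hcon e he v hv
          | zero => simp
          | add a b _ _ ha hb => rw [add_lie, ha, hb, add_zero]
          | smul c a _ ha => rw [smul_lie, ha, smul_zero]
        obtain ⟨e, he, v, hv, hne⟩ := hex
        have hey : ⁅e, y⁆ = 0 := hQi e he
        have hvy2 : ⁅v, y⁆ ∈ Lc 2 := hgrade 1 1 v hv y hy
        -- rewrite the nonzero element as `⁅e, ⁅v, y⁆⁆`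
        have ht : ⁅⁅e, v⁆, y⁆ = ⁅e, ⁅v, y⁆⁆ := by
          rw [lie_lie, hey]; simp
        set t : L := ⁅e, ⁅v, y⁆⁆ with htdef
        have htne : t ≠ 0 := ht ▸ hne
        have htmem : t ∈ Lc (i + 2) := hgrade i 2 e he _ hvy2
        have hty : ⁅t, y⁆ = 0 := by
          rw [htdef, lie_lie, hey, hy2 _ hvy2]
          simp
        -- `Lc (i+2)` is one-dimensional, spanned by `t`
        intro u hu
        have hdim2 : Module.finrank F (Lc (i + 1 + 1)) = 1 := hdim _ (by omega)
        have : i + 1 + 1 = i + 2 := by omega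
        rw [this] at hu hdim2
        obtain ⟨c, hc⟩ := (finrank_eq_one_iff_of_nonzero'
          (⟨t, htmem⟩ : Lc (i + 2)) (by simpa using htne)).mp hdim2 ⟨u, hu⟩
        have hc' : c • t = u := congrArg Subtype.val hc
        rw [← hc', smul_lie, hty, smul_zero]
  intro i hi u hu
  rcases eq_or_lt_of_le hi with h1 | h2
  · -- i = 1
    have : ⁅u, y⁆ ∈ Lc 2 := by
      have := hgrade 1 1 u (h1 ▸ hu) y hy
      simpa using this
    exact hy2 _ this
  · -- i ≥ 2
    rcases key i h2 with hQ | hQ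
    · rw [hQ u hu]; simp
    · exact hQ _ (hgrade i 1 u hu y hy)
end

section
/- Let p be an odd prime, F a field of characteristic p, and n an integer with 1 < n < p. Let L be an algebra of type n over F with nonzero sequence (β_i), first constituent length ℓ > 4p with ℓ = q + k0 + n − 1 for a power q = p^c of p and an integer k0 with 2 ≤ k0 ≤ n − 2, and second constituent length ℓ₂ equal to q or q − 1. Let s be an integer with k0 ≤ s ≤ n − 1 such that β_{q+s} ≠ 0 and β_i = 0 for all i with q + s < i < q + k0 + ℓ₂; set t := k0 + ℓ₂ − s − n + 1 and m := q + k0 + ℓ₂. Then β_{m+i} = (−1)^i C((q−t)/2, i) β_m for every integer i with 0 ≤ i ≤ 2⌊s/2⌋ − 1, where C(·,·) is the binomial coefficient interpreted in F. -/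
open Finset

/-- Key binomial identity: `∑_{h≤d} (-1)^h C(u,h) C(a-h, d-h) = C(a-u, d)` for `u ≤ a`. -/
lemma aux_L1 {F : Type*} [CommRing F] :
    ∀ (u : ℕ), ∀ a d : ℕ, u ≤ a →
      ∑ h ∈ range (d+1), (-1 : F)^h * ((u.choose h : ℕ) : F) * (((a-h).choose (d-h) : ℕ) : F)
        = (((a-u).choose d : ℕ) : F) := by
  intro u
  induction u with
  | zero =>
      intro a d _
      rw [Finset.sum_eq_single 0]
      · simp
      · intro h _ h0
        rcases Nat.exists_eq_succ_of_ne_zero h0 with ⟨h', rfl⟩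
        simp [Nat.choose_zero_succ]
      · simp
  | succ u IH =>
      intro a d hua
      have hua' : u ≤ a - 1 := by omega
      rcases d with _ | d'
      · simp
      · have key : ∑ h ∈ range (d'+1+1), (-1 : F)^h * ((u+1).choose h : F) * (((a-h).choose (d'+1-h)) : F)
            = (∑ h ∈ range (d'+1+1), (-1 : F)^h * (u.choose h : F) * (((a-h).choose (d'+1-h)) : F))
              - (∑ h ∈ range (d'+1), (-1 : F)^h * (u.choose h : F) * ((((a-1)-h).choose (d'-h)) : F)) := by
          rw [Finset.sum_range_succ' (fun h => (-1 : F)^h * ((u+1).choose h : F) * (((a-h).choose (d'+1-h)) : F)) (d'+1)]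
          rw [Finset.sum_range_succ' (fun h => (-1 : F)^h * ((u).choose h : F) * (((a-h).choose (d'+1-h)) : F)) (d'+1)]
          have hcong : ∀ h ∈ range (d'+1),
              (-1 : F)^(h+1) * ((u+1).choose (h+1) : F) * (((a-(h+1)).choose (d'+1-(h+1))) : F)
              = (-1 : F)^(h+1) * ((u).choose (h+1) : F) * (((a-(h+1)).choose (d'+1-(h+1))) : F)
                - (-1 : F)^h * ((u).choose h : F) * ((((a-1)-h).choose (d'-h)) : F) := by
            intro h _
            have e1 : (u+1).choose (h+1) = u.choose h + u.choose (h+1) := Nat.choose_succ_succ' u h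
            have e2 : a - (h+1) = (a-1) - h := by omega
            have e3 : d'+1-(h+1) = d' - h := by omega
            rw [e1, e2, e3]
            push_cast
            ring
          rw [Finset.sum_congr rfl hcong, Finset.sum_sub_distrib]
          simp only [Nat.choose_zero_right]
          ring
        rw [key, IH a (d'+1) (by omega), IH (a-1) d' hua']
        have e4 : a - u = (a - (u+1)) + 1 := by omega
        have e5 : a - 1 - u = a - (u+1) := by omega
        have e6 : d' + 1 - 1 = d' := rfl
        rw [e4, e5, Nat.choose_succ_succ' (a - (u+1)) d']
        push_cast
        ring

/-- In characteristic where `(q : F) = 0`: `C(q-E, j) = (-1)^j C(E-1+j, j)` for `j < p`. -/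
lemma aux_CC {F : Type*} [Field F] (p : ℕ) (hp : p.Prime) [CharP F p]
    (q E : ℕ) (hq0 : (q : F) = 0) (hE : 1 ≤ E) :
    ∀ j : ℕ, j < p → E + j ≤ q →
      (((q - E).choose j : ℕ) : F) = (-1 : F)^j * (((E - 1 + j).choose j : ℕ) : F) := by
  have hfac : ∀ j : ℕ, j < p → ((j.factorial : ℕ) : F) ≠ 0 := by
    intro j hj
    rw [Ne, CharP.cast_eq_zero_iff F p, hp.dvd_factorial]
    omega
  have hdesc : ∀ j : ℕ, E + j ≤ q →
      (((q - E).descFactorial j : ℕ) : F) = (-1 : F)^j * (((E - 1 + j).descFactorial j : ℕ) : F) := by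
    intro j
    induction j with
    | zero => simp
    | succ j IH =>
        intro hle
        have hle' : E + j ≤ q := by omega
        rw [Nat.descFactorial_succ]
        have e1 : E - 1 + (j+1) = (E - 1 + j) + 1 := by omega
        rw [e1, Nat.succ_descFactorial_succ]
        have e2 : E - 1 + j + 1 = E + j := by omega
        have e3 : ((q - E - j : ℕ) : F) = -(((E + j : ℕ) : F)) := by
          have e : q - E - j = q - (E + j) := by omega
          rw [e, Nat.cast_sub hle', hq0]
          push_cast
          ring
        push_cast [e3, IH hle', e2]
        ring
  intro j hj hle
  have h1 : (q - E).choose j * j.factorial = (q - E).descFactorial j := by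
    rw [Nat.choose_eq_descFactorial_div_factorial]
    exact Nat.div_mul_cancel (Nat.factorial_dvd_descFactorial _ _)
  have h2 : (E - 1 + j).choose j * j.factorial = (E - 1 + j).descFactorial j := by
    rw [Nat.choose_eq_descFactorial_div_factorial]
    exact Nat.div_mul_cancel (Nat.factorial_dvd_descFactorial _ _)
  have hd := hdesc j hle
  rw [← h1, ← h2] at hd
  push_cast at hd
  exact mul_right_cancel₀ (hfac j hj) (by linear_combination hd)

/-- Alternating Pascal recursion for weighted sums. -/
lemma aux_pascal {F : Type*} [CommRing F] (r : ℕ) (f : ℕ → F) :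
    ∑ k ∈ range (r+2), (-1:F)^k * (((r+1).choose k : ℕ) : F) * f k
      = ∑ k ∈ range (r+1), (-1:F)^k * ((r.choose k : ℕ) : F) * f k
        - ∑ k ∈ range (r+1), (-1:F)^k * ((r.choose k : ℕ) : F) * f (k+1) := by
  have h0 : ∑ k ∈ range (r+2), (-1:F)^k * ((r.choose k : ℕ) : F) * f k
      = ∑ k ∈ range (r+1), (-1:F)^k * ((r.choose k : ℕ) : F) * f k := by
    rw [Finset.sum_range_succ, Nat.choose_succ_self]
    simp
  have h1 : ∑ k ∈ range (r+1), (-1:F)^(k+1) * ((r.choose (k+1) : ℕ) : F) * f (k+1)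
      = (∑ k ∈ range (r+1), (-1:F)^k * ((r.choose k : ℕ) : F) * f k) - f 0 := by
    rw [← h0, Finset.sum_range_succ' (fun k => (-1:F)^k * ((r.choose k : ℕ) : F) * f k) (r+1)]
    simp
  rw [Finset.sum_range_succ' (fun k => (-1:F)^k * (((r+1).choose k : ℕ) : F) * f k) (r+1)]
  have hcong : ∀ k ∈ range (r+1),
      (-1:F)^(k+1) * (((r+1).choose (k+1) : ℕ) : F) * f (k+1)
      = (-1:F)^(k+1) * ((r.choose (k+1) : ℕ) : F) * f (k+1)
        - (-1:F)^k * ((r.choose k : ℕ) : F) * f (k+1) := by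
    intro k _
    rw [Nat.choose_succ_succ' r k]
    push_cast
    ring
  rw [Finset.sum_congr rfl hcong, Finset.sum_sub_distrib, h1]
  simp only [Nat.choose_zero_right, Nat.cast_one, pow_zero]
  ring

set_option maxHeartbeats 2000000 in
/-- **Proposition (initial portion of the second constituent).**
Under the hypotheses of the spurious configuration (`ℓ = q + k0 + n − 1` with
`2 ≤ k0 ≤ n − 2`, `ℓ₂ ∈ {q, q − 1}`, `β (q+s)` the trailing term of the first
constituent), with `t := k0 + ℓ₂ − s − n + 1`, `u := (q − t)/2`, and
`m := q + k0 + ℓ₂` the index of the leading term of the second constituent: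
`β (m+i) = (−1)^i C(u, i) β m` for `0 ≤ i ≤ 2⌊s/2⌋ − 1`. -/
theorem second_constituent_initial_values
    (p : ℕ) (hp : p.Prime) (hodd : Odd p)
    (n : ℕ) (hn1 : 1 < n) (hnp : n < p)
    {F : Type*} [Field F] [CharP F p]
    {L : Type*} [LieRing L] [LieAlgebra F L]
    (Lc : ℕ → Submodule F L)
    (hinternal : DirectSum.IsInternal Lc)
    (h0 : Lc 0 = ⊥)
    (hgrade : ∀ i j : ℕ, ∀ x ∈ Lc i, ∀ y ∈ Lc j, ⁅x, y⁆ ∈ Lc (i + j))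
    (hdim1 : Module.finrank F (Lc 1) = 1)
    (hmid : ∀ i : ℕ, 1 < i → i < n → Lc i = ⊥)
    (hdimn : ∀ i : ℕ, n ≤ i → Module.finrank F (Lc i) = 1)
    (hgen : ∀ i : ℕ, n ≤ i →
      Lc (i + 1) = Submodule.span F {w : L | ∃ x ∈ Lc i, ∃ u ∈ Lc 1, w = ⁅x, u⁆})
    (z : L) (hz : z ∈ Lc 1) (hz0 : z ≠ 0)
    (e : ℕ → L) (hen : e n ∈ Lc n) (hen0 : e n ≠ 0)
    (hrec : ∀ i : ℕ, n ≤ i → e (i + 1) = ⁅e i, z⁆)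
    (β : ℕ → F) (hβ : ∀ i : ℕ, n < i → ⁅e i, e n⁆ = β i • e (i + n))
    (hne : ∃ i : ℕ, n < i ∧ β i ≠ 0)
    (ℓ : ℕ) (hℓ2n : 2 * n ≤ ℓ)
    (hfz : ∀ i : ℕ, n < i → i + n ≤ ℓ → β i = 0)
    (hfl : β (ℓ - n + 1) ≠ 0)
    (hbig : 4 * p < ℓ)
    (c : ℕ) (q : ℕ) (hq : q = p ^ c)
    (k0 : ℕ) (hk0 : 2 ≤ k0) (hk0' : k0 + 2 ≤ n)
    (hℓval : ℓ + 1 = q + k0 + n)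
    (ℓ₂ : ℕ) (hℓ₂n : n ≤ ℓ₂)
    (hsz : ∀ j : ℕ, 0 < j → j + n ≤ ℓ₂ → β (ℓ + j) = 0)
    (hsl : β (ℓ + ℓ₂ - n + 1) ≠ 0)
    (hℓ₂val : ℓ₂ = q ∨ ℓ₂ = q - 1)
    (s : ℕ) (hs1 : k0 ≤ s) (hs2 : s ≤ n - 1)
    (hstrail : β (q + s) ≠ 0)
    (hszero : ∀ i : ℕ, q + s < i → i < q + k0 + ℓ₂ → β i = 0)
    (t : ℤ) (ht : t = (k0 : ℤ) + ℓ₂ - s - n + 1)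
    (u : ℕ) (hu : (q : ℤ) - t = 2 * u)
    (m : ℕ) (hm : m = q + k0 + ℓ₂) :
    ∀ i : ℕ, i ≤ 2 * (s / 2) - 1 →
      β (m + i) = (-1 : F) ^ i * (u.choose i : F) * β m := by
  classical
  -- ### Phase I : structure of the algebra
  have hLc1 : Lc 1 = Submodule.span F {z} := by
    haveI : FiniteDimensional F (Lc 1) := FiniteDimensional.of_finrank_pos (by rw [hdim1]; norm_num)
    refine (Submodule.eq_of_le_of_finrank_le ?_ ?_).symm
    · rw [Submodule.span_le, Set.singleton_subset_iff]; exact hz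
    · rw [hdim1, finrank_span_singleton hz0]
  have espan : ∀ i : ℕ, n ≤ i → e i ∈ Lc i ∧ e i ≠ 0 ∧ Lc i = Submodule.span F {e i} := by
    intro i hi
    induction i, hi using Nat.le_induction with
    | base =>
        refine ⟨hen, hen0, ?_⟩
        haveI : FiniteDimensional F (Lc n) := FiniteDimensional.of_finrank_pos
            (by rw [hdimn n le_rfl]; norm_num)
        refine (Submodule.eq_of_le_of_finrank_le ?_ ?_).symm
        · rw [Submodule.span_le, Set.singleton_subset_iff]; exact hen
        · rw [hdimn n le_rfl, finrank_span_singleton hen0]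
    | succ i hi IH =>
        obtain ⟨hmem, hne0, hspan⟩ := IH
        have hmem' : e (i+1) ∈ Lc (i+1) := by
          rw [hrec i hi]
          exact hgrade i 1 (e i) hmem z hz
        have hsub : Lc (i+1) ≤ Submodule.span F {e (i+1)} := by
          rw [hgen i hi, Submodule.span_le]
          rintro w ⟨x, hx, u', hu', rfl⟩
          rw [hspan] at hx
          rw [hLc1] at hu'
          obtain ⟨a, rfl⟩ := Submodule.mem_span_singleton.mp hx
          obtain ⟨b, rfl⟩ := Submodule.mem_span_singleton.mp hu'
          have : ⁅a • e i, b • z⁆ = (a * b) • e (i+1) := by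
            rw [hrec i hi, smul_lie, lie_smul, smul_smul]
          rw [this]
          exact Submodule.smul_mem _ _ (Submodule.mem_span_singleton_self _)
        have hne0' : e (i+1) ≠ 0 := by
          intro h0
          have hbot : Lc (i+1) = ⊥ := by
            have hh : Submodule.span F {e (i+1)} = ⊥ := by
              rw [h0, Submodule.span_zero_singleton]
            exact le_bot_iff.mp (hh ▸ hsub)
          have h1 := hdimn (i+1) (by omega)
          rw [hbot, finrank_bot] at h1
          exact absurd h1 (by norm_num)
        refine ⟨hmem', hne0', le_antisymm hsub ?_⟩
        rw [Submodule.span_le, Set.singleton_subset_iff]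
        exact hmem'
  have enz : ∀ i : ℕ, n ≤ i → e i ≠ 0 := fun i hi => (espan i hi).2.1
  set G : ℕ → ℕ → F := fun i j =>
    ∑ k ∈ range (j - n + 1), (-1 : F)^k * (((j - n).choose k : ℕ) : F) * β (i + k) with hGdef
  have hbr : ∀ j : ℕ, n ≤ j → ∀ i : ℕ, n < i → ⁅e i, e j⁆ = G i j • e (i + j) := by
    intro j hj
    induction j, hj using Nat.le_induction with
    | base =>
        intro i hi
        have hGn : G i n = β i := by simp [hGdef]
        rw [hGn, hβ i hi]
    | succ j hj IH =>
        intro i hi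
        have hstep : ⁅e i, e (j+1)⁆ = (G i j - G (i+1) j) • e (i + (j+1)) := by
          rw [hrec j hj]
          have hlz : ⁅e i, z⁆ = e (i+1) := (hrec i (by omega)).symm
          calc ⁅e i, ⁅e j, z⁆⁆ = ⁅⁅e i, e j⁆, z⁆ + ⁅e j, ⁅e i, z⁆⁆ := leibniz_lie _ _ _
            _ = G i j • ⁅e (i+j), z⁆ + ⁅e j, e (i+1)⁆ := by
                rw [IH i hi, smul_lie, hlz]
            _ = G i j • e (i+j+1) - ⁅e (i+1), e j⁆ := by
                rw [← hrec (i+j) (by omega)]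
                rw [← lie_skew (e (i+1)) (e j)]
                abel
            _ = G i j • e (i+j+1) - G (i+1) j • e (i+1+j) := by rw [IH (i+1) (by omega)]
            _ = (G i j - G (i+1) j) • e (i + (j+1)) := by
                have h1 : i+1+j = i+j+1 := by omega
                have h2 : i+(j+1) = i+j+1 := by omega
                rw [h1, h2, sub_smul]
        rw [hstep]
        congr 1
        symm
        have hj1 : j + 1 - n = (j - n) + 1 := by omega
        show (∑ k ∈ range ((j+1) - n + 1), (-1 : F)^k * (((j+1) - n).choose k : F) * β (i + k)) = _
        rw [hj1]
        have := aux_pascal (j - n) (fun k => β (i + k))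
        rw [this]
        have h2 : ∀ k ∈ range ((j-n)+1),
            (-1:F)^k * (((j-n).choose k : ℕ) : F) * β (i + (k+1))
            = (-1:F)^k * (((j-n).choose k : ℕ) : F) * β ((i+1) + k) := by
          intro k _
          have : i + (k+1) = (i+1) + k := by omega
          rw [this]
        rw [Finset.sum_congr rfl h2]
  have hanti : ∀ x y : ℕ, n < x → n < y → G x y = - G y x := by
    intro x y hx hy
    have h1 : ⁅e x, e y⁆ = - ⁅e y, e x⁆ := (lie_skew (e x) (e y)).symm
    rw [hbr y (by omega) x hx, hbr x (by omega) y hy] at h1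
    have h2 : y + x = x + y := by omega
    rw [h2, ← neg_smul] at h1
    have h3 : (G x y - (- G y x)) • e (x+y) = 0 := by
      rw [sub_smul, h1, neg_smul]
      abel
    rcases smul_eq_zero.mp h3 with h | h
    · exact sub_eq_zero.mp h
    · exact absurd h (enz (x+y) (by omega))
  have hjac : ∀ a b : ℕ, n < a → n < b →
      β b * G a (b+n) = G a b * β (a+b) + β a * G b (a+n) := by
    intro a b ha hb
    have h1 : ⁅e a, ⁅e b, e n⁆⁆ = ⁅⁅e a, e b⁆, e n⁆ + ⁅e b, ⁅e a, e n⁆⁆ := leibniz_lie _ _ _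
    rw [hβ b hb, lie_smul, hbr (b+n) (by omega) a ha] at h1
    rw [hbr b (by omega) a ha, smul_lie, hβ (a+b) (by omega)] at h1
    rw [hβ a ha, lie_smul, hbr (a+n) (by omega) b hb] at h1
    have e1 : a + (b+n) = a + b + n := by omega
    have e2 : b + (a+n) = a + b + n := by omega
    rw [e1, e2, smul_smul, smul_smul, smul_smul] at h1
    have h3 : (β b * G a (b+n) - (G a b * β (a+b) + β a * G b (a+n))) • e (a+b+n) = 0 := by
      rw [sub_smul, add_smul, h1]
      abel
    rcases smul_eq_zero.mp h3 with h | h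
    · exact sub_eq_zero.mp h
    · exact absurd h (enz (a+b+n) (by omega))
  -- ### arithmetic setup
  obtain ⟨ε, hε1, hl2ε⟩ : ∃ ε : ℕ, ε ≤ 1 ∧ ℓ₂ + ε = q := by
    have hqpos : 0 < q := by rw [hq]; exact pow_pos hp.pos c
    rcases hℓ₂val with h | h
    · exact ⟨0, by omega, by omega⟩
    · exact ⟨1, by omega, by omega⟩
  have hppos := hp.two_le
  have hp3 : 3 ≤ p := by
    rcases hodd with ⟨k, hk⟩; omega
  have hqbig : 2*p + 6 ≤ q := by omega
  have hm2 : m + ε = 2*q + k0 := by omega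
  have h2u : 2*u + k0 + 1 = s + n + ε := by
    rw [ht] at hu
    have hc : (ℓ₂ : ℤ) + (ε : ℤ) = (q : ℤ) := by exact_mod_cast hl2ε
    omega
  have hq0 : (q : F) = 0 := by
    have hc0 : c ≠ 0 := by
      rintro rfl
      rw [pow_zero] at hq
      omega
    rw [hq]
    push_cast
    rw [CharP.cast_eq_zero F p]
    exact zero_pow hc0
  have hqodd : Odd q := by rw [hq]; exact hodd.pow
  have hz1' : ∀ i : ℕ, n < i → i < q + k0 → β i = 0 := fun i h1 h2 => hfz i h1 (by omega)
  have hz2' : ∀ i : ℕ, q + s < i → i < m → β i = 0 := fun i h1 h2 => hszero i h1 (by omega)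
  have hβm : β m ≠ 0 := by
    have hidx : ℓ + ℓ₂ - n + 1 = m := by omega
    rwa [hidx] at hsl
  have hsn : s + 1 ≤ n := by omega
  have castne : ∀ j : ℕ, 0 < j → j < p → ((j : ℕ) : F) ≠ 0 := by
    intro j h1 h2
    rw [Ne, CharP.cast_eq_zero_iff F p]
    intro hd
    have := Nat.le_of_dvd h1 hd
    omega
  have h2F : (2 : F) ≠ 0 := by
    have := castne 2 (by norm_num) (by omega)
    exact_mod_cast this
  -- ### the master relation
  have MR : ∀ w d : ℕ, k0 - 1 ≤ w → w ≤ s → d + 1 ≤ w + ε → d + 1 ≤ n →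
      (∑ k ∈ range ((s-w)+1),
          (-1:F)^k * (((q - (w+n+ε-k0-d)).choose k : ℕ) : F) * β (q+w+k)) * β (m+d)
      = β (q+w) * ∑ h ∈ range (d+1),
          (-1:F)^((q - (w+n+ε-k0-d)) - d + h)
            * (((q - (w+n+ε-k0-d)).choose (d-h) : ℕ) : F) * β (m+h) := by
    intro w d hw1 hw2 hd hdn
    set E : ℕ := w+n+ε-k0-d with hEdef
    have hE : E + (k0 + d) = w + n + ε := by omega
    have hEle : E ≤ 2*n + 1 := by omega
    set B : ℕ := q - E with hBdef
    have hB : B + E = q := by omega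
    set a : ℕ := q + w with hadef
    set b : ℕ := n + B with hbdef
    have hab : a + b = m + d := by omega
    have hbn : n < b := by omega
    have ha : n < a := by omega
    have hβb : β b = 0 := hz1' b hbn (by omega)
    have hj := hjac a b ha hbn
    rw [hβb, zero_mul] at hj
    have hG2 : G b (a+n) = - G (a+n) b := hanti b (a+n) hbn (by omega)
    rw [hG2] at hj
    -- hj : 0 = G a b * β (a+b) + β a * (- G (a+n) b)
    have hE1 : G a b = ∑ k ∈ range ((s-w)+1), (-1:F)^k * ((B.choose k : ℕ) : F) * β (a+k) := by
      show (∑ k ∈ range (b - n + 1), (-1 : F)^k * (((b-n).choose k : ℕ) : F) * β (a + k)) = _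
      have hbn' : b - n = B := by omega
      rw [hbn']
      have hsw : s - w + 1 ≤ B + 1 := by omega
      rw [Finset.range_eq_Ico, ← Finset.sum_Ico_consecutive _ (Nat.zero_le (s-w+1)) hsw]
      have hzero : ∑ k ∈ Finset.Ico (s-w+1) (B+1),
          (-1:F)^k * ((B.choose k : ℕ) : F) * β (a+k) = 0 := by
        apply Finset.sum_eq_zero
        intro k hk
        rw [Finset.mem_Ico] at hk
        have hβ0 : β (a+k) = 0 := hz2' (a+k) (by omega) (by omega)
        rw [hβ0, mul_zero]
      rw [hzero, add_zero, ← Finset.range_eq_Ico]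
    have hE2 : G (a+n) b = ∑ h ∈ range (d+1),
        (-1:F)^(B - d + h) * ((B.choose (d-h) : ℕ) : F) * β (m+h) := by
      show (∑ k ∈ range (b - n + 1), (-1 : F)^k * (((b-n).choose k : ℕ) : F) * β ((a+n) + k)) = _
      have hbn' : b - n = B := by omega
      rw [hbn']
      have hd1 : B - d ≤ B + 1 := by omega
      rw [Finset.range_eq_Ico, ← Finset.sum_Ico_consecutive _ (Nat.zero_le (B-d)) hd1]
      have hzero : ∑ k ∈ Finset.Ico 0 (B-d),
          (-1:F)^k * ((B.choose k : ℕ) : F) * β ((a+n)+k) = 0 := by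
        apply Finset.sum_eq_zero
        intro k hk
        rw [Finset.mem_Ico] at hk
        have hβ0 : β ((a+n)+k) = 0 := hz2' ((a+n)+k) (by omega) (by omega)
        rw [hβ0, mul_zero]
      rw [hzero, zero_add, Finset.sum_Ico_eq_sum_range]
      have hlen : B + 1 - (B - d) = d + 1 := by omega
      rw [hlen]
      apply Finset.sum_congr rfl
      intro h hh
      rw [Finset.mem_range] at hh
      have hidx : (a+n) + (B - d + h) = m + h := by omega
      have hch : B.choose (B - d + h) = B.choose (d - h) := by
        have he : B - d + h = B - (d - h) := by omega
        rw [he, Nat.choose_symm (by omega)]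
      rw [hidx, hch]
    rw [hE1, hE2, hab] at hj
    -- hj : 0 = (sum) * β (m+d) + β a * (- sum2)
    have : (∑ k ∈ range ((s-w)+1), (-1:F)^k * ((B.choose k : ℕ) : F) * β (a+k)) * β (m+d)
        = β a * ∑ h ∈ range (d+1), (-1:F)^(B-d+h) * ((B.choose (d-h) : ℕ) : F) * β (m+h) := by
      linear_combination -hj
    exact this
  -- ### main proof
  -- dispose of the degenerate case s = k0
  rcases eq_or_lt_of_le hs1 with hsk | hsk
  · -- s = k0 : derive a contradiction
    exfalso
    have hMR := MR (k0-1) 0 (by omega) (by omega) (by omega) (by omega)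
    have hEval : (k0-1)+n+ε-k0-0 = n+ε-1 := by omega
    rw [hEval] at hMR
    have hβ1 : β (q+(k0-1)) = 0 := hz1' (q+(k0-1)) (by omega) (by omega)
    -- left sum over range 2 (since s - (k0-1) = 1)
    have hsw : s - (k0-1) = 1 := by omega
    rw [hsw] at hMR
    rw [Finset.sum_range_succ, Finset.sum_range_one] at hMR
    rw [hβ1] at hMR
    have hidx1 : q + (k0-1) + 1 = q + s := by omega
    rw [hidx1] at hMR
    rw [Finset.sum_range_one] at hMR
    simp only [pow_zero, pow_one, Nat.choose_zero_right, Nat.choose_one_right,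
      Nat.cast_one, one_mul, mul_zero, zero_mul, mul_one, zero_add, add_zero,
      Nat.sub_zero, zero_mul] at hMR
    rw [hβ1] at hMR
    have hcast : ((q - (n+ε-1) : ℕ) : F) = -(((n+ε-1 : ℕ)) : F) := by
      rw [Nat.cast_sub (by omega), hq0, zero_sub]
    rw [hcast] at hMR
    have hprod : (((n+ε-1 : ℕ)) : F) * (β (q+s) * β m) = 0 := by
      linear_combination hMR
    have hne : (((n+ε-1 : ℕ)) : F) ≠ 0 := castne (n+ε-1) (by omega) (by omega)
    rcases mul_eq_zero.mp hprod with h | h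
    · exact hne h
    · rcases mul_eq_zero.mp h with h' | h'
      · exact hstrail h'
      · exact hβm h'
  · -- s > k0
    -- first: β (q+(s-1)) = -u * β (q+s)
    have hγ : β (q+(s-1)) = -(u : F) * β (q+s) := by
      have hMR := MR (s-1) 0 (by omega) (by omega) (by omega) (by omega)
      have hEval : (s-1)+n+ε-k0-0 = 2*u := by omega
      rw [hEval] at hMR
      have hsw : s - (s-1) = 1 := by omega
      rw [hsw] at hMR
      rw [Finset.sum_range_succ, Finset.sum_range_one, Finset.sum_range_one] at hMR
      have hidx1 : q + (s-1) + 1 = q + s := by omega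
      rw [hidx1] at hMR
      simp only [pow_zero, pow_one, Nat.choose_zero_right, Nat.choose_one_right,
        Nat.cast_one, one_mul, mul_one, Nat.sub_zero, add_zero] at hMR
      have hodd' : Odd (q - 2*u) := Nat.Odd.sub_even (by omega) hqodd (even_two_mul u)
      rw [hodd'.neg_one_pow] at hMR
      have hcast : ((q - 2*u : ℕ) : F) = -(2*(u : F)) := by
        rw [Nat.cast_sub (by omega), hq0]
        push_cast
        ring
      rw [hcast] at hMR
      have h2 : (2 : F) * ((β (q+(s-1)) + (u:F) * β (q+s)) * β m) = 0 := by
        linear_combination hMR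
      rcases mul_eq_zero.mp h2 with h | h
      · exact absurd h h2F
      · rcases mul_eq_zero.mp h with h' | h'
        · linear_combination h'
        · exact absurd h' hβm
    -- the inductive determination
    have main : ∀ i : ℕ, i ≤ 2 * (s / 2) - 1 →
        β (m+i) = (-1:F)^i * ((u.choose i : ℕ) : F) * β m := by
      intro i
      induction i using Nat.strong_induction_on with
      | _ i IH =>
        intro hi
        rcases Nat.eq_zero_or_pos i with rfl | hipos
        · simp
        have hip : i < p := by omega
        rcases Nat.even_or_odd i with hiev | hiodd
        · -- even case : use the relation with w = s-1
          have hio2 : i % 2 = 0 := Nat.even_iff.mp hiev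
          have hMR := MR (s-1) i (by omega) (by omega) (by omega) (by omega)
          have hEval : (s-1)+n+ε-k0-i = 2*u-i := by omega
          rw [hEval] at hMR
          have hsw : s - (s-1) = 1 := by omega
          rw [hsw] at hMR
          rw [Finset.sum_range_succ, Finset.sum_range_one] at hMR
          have hidx1 : q + (s-1) + 1 = q + s := by omega
          rw [hidx1] at hMR
          simp only [pow_zero, pow_one, Nat.choose_zero_right, Nat.choose_one_right,
            Nat.cast_one, one_mul, mul_one, add_zero] at hMR
          have hcast2 : ((q - (2*u-i) : ℕ) : F) = -(((2*u-i : ℕ)) : F) := by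
            rw [Nat.cast_sub (by omega), hq0, zero_sub]
          rw [hcast2, hγ] at hMR
          have hconv : ∀ h ∈ range (i+1),
              (-1:F)^(q - (2*u-i) - i + h) * (((q - (2*u-i)).choose (i-h) : ℕ) : F) * β (m+h)
              = -((((2*u-1-h).choose (i-h)) : ℕ) : F) * β (m+h) := by
            intro h hh
            rw [Finset.mem_range] at hh
            have hCC := aux_CC p hp q (2*u-i) hq0 (by omega) (i-h) (by omega) (by omega)
            have hidx : (2*u-i) - 1 + (i-h) = 2*u-1-h := by omega
            rw [hidx] at hCC
            rw [hCC]
            have hod : Odd (q - (2*u-i) - i) := by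
              have he : q - (2*u-i) - i = q - 2*u := by omega
              rw [he]
              exact Nat.Odd.sub_even (by omega) hqodd (even_two_mul u)
            rw [pow_add, hod.neg_one_pow]
            have h4 : (-1:F)^h * (-1:F)^(i-h) = 1 := by
              rw [← pow_add]
              have he : h + (i-h) = i := by omega
              rw [he]
              exact hiev.neg_one_pow
            linear_combination (-((((2*u-1-h).choose (i-h) : ℕ)) : F) * β (m+h)) * h4
          rw [Finset.sum_congr rfl hconv] at hMR
          rw [Finset.sum_range_succ, Nat.sub_self, Nat.choose_zero_right] at hMR
          have hIH : ∀ h ∈ range i,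
              -((((2*u-1-h).choose (i-h)) : ℕ) : F) * β (m+h)
              = -((((2*u-1-h).choose (i-h)) : ℕ) : F)
                  * ((-1:F)^h * ((u.choose h : ℕ) : F) * β m) := by
            intro h hh
            rw [Finset.mem_range] at hh
            rw [IH h hh (by omega)]
          rw [Finset.sum_congr rfl hIH] at hMR
          have hsum : (∑ h ∈ range i, -((((2*u-1-h).choose (i-h)) : ℕ) : F)
                * ((-1:F)^h * ((u.choose h : ℕ) : F) * β m))
              = -((∑ h ∈ range i, (-1:F)^h * ((u.choose h : ℕ) : F)
                  * (((2*u-1-h).choose (i-h) : ℕ) : F)) * β m) := by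
            rw [Finset.sum_mul, ← Finset.sum_neg_distrib]
            apply Finset.sum_congr rfl
            intro h _
            ring
          rw [hsum] at hMR
          have hid := aux_L1 (F := F) u (2*u-1) i (by omega)
          rw [Finset.sum_range_succ, Nat.sub_self, Nat.choose_zero_right] at hid
          have h2uu : 2*u-1-u = u-1 := by omega
          rw [h2uu, hiev.neg_one_pow] at hid
          -- Pascal and the absorption identity, in ℕ then cast
          have hpasF : ((u.choose i : ℕ) : F)
              = (((u-1).choose (i-1) : ℕ) : F) + (((u-1).choose i : ℕ) : F) := by
            have h := Nat.choose_succ_succ' (u-1) (i-1)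
            rw [show u-1+1 = u by omega, show i-1+1 = i by omega] at h
            exact_mod_cast congrArg (fun x : ℕ => (x : F)) h
          have hmulF : (u : F) * (((u-1).choose (i-1) : ℕ) : F)
              = ((u.choose i : ℕ) : F) * (i : F) := by
            have h := Nat.add_one_mul_choose_eq (u-1) (i-1)
            rw [show u-1+1 = u by omega, show i-1+1 = i by omega] at h
            exact_mod_cast congrArg (fun x : ℕ => (x : F)) h
          have hcast3 : (((2*u-i : ℕ)) : F) = 2*(u:F) - (i:F) := by
            rw [Nat.cast_sub (by omega)]
            push_cast
            ring
          have hkey : β (q+s) * ((i:F) * β (m+i))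
              = β (q+s) * ((i:F) * (((u.choose i : ℕ) : F) * β m)) := by
            linear_combination (-1 : F) * hMR
              + (β (q+s) * β (m+i)) * hcast3
              - ((u:F) * β (q+s) * β m) * hid
              + ((u:F) * β (q+s) * β m) * hpasF
              + (β (q+s) * β m) * hmulF
          have hkey2 := mul_left_cancel₀ hstrail hkey
          have hkey3 := mul_left_cancel₀ (castne i hipos hip) hkey2
          rw [hkey3, hiev.neg_one_pow]
          ring
        · -- odd case : use the relation with w = s
          have hio2 : i % 2 = 1 := Nat.odd_iff.mp hiodd
          have hMR := MR s i (by omega) le_rfl (by omega) (by omega)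
          have hEval : s+n+ε-k0-i = 2*u+1-i := by omega
          rw [hEval] at hMR
          have hsw : s - s = 0 := by omega
          rw [hsw] at hMR
          rw [Finset.sum_range_one] at hMR
          simp only [pow_zero, Nat.choose_zero_right, Nat.cast_one, one_mul, add_zero] at hMR
          have hconv : ∀ h ∈ range (i+1),
              (-1:F)^(q - (2*u+1-i) - i + h) * (((q - (2*u+1-i)).choose (i-h) : ℕ) : F) * β (m+h)
              = -((((2*u-h).choose (i-h)) : ℕ) : F) * β (m+h) := by
            intro h hh
            rw [Finset.mem_range] at hh
            have hCC := aux_CC p hp q (2*u+1-i) hq0 (by omega) (i-h) (by omega) (by omega)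
            have hidx : (2*u+1-i) - 1 + (i-h) = 2*u-h := by omega
            rw [hidx] at hCC
            rw [hCC]
            have hev : Even (q - (2*u+1-i) - i) := by
              have he : q - (2*u+1-i) - i = q - (2*u+1) := by omega
              rw [he]
              exact Nat.Odd.sub_odd hqodd ⟨u, by omega⟩
            rw [pow_add, hev.neg_one_pow, one_mul]
            have h4 : (-1:F)^h * (-1:F)^(i-h) = -1 := by
              rw [← pow_add]
              have he : h + (i-h) = i := by omega
              rw [he]
              exact hiodd.neg_one_pow
            linear_combination ((((2*u-h).choose (i-h) : ℕ)) : F) * β (m+h) * h4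
          rw [Finset.sum_congr rfl hconv] at hMR
          rw [Finset.sum_range_succ, Nat.sub_self, Nat.choose_zero_right] at hMR
          have hIH : ∀ h ∈ range i,
              -((((2*u-h).choose (i-h)) : ℕ) : F) * β (m+h)
              = -((((2*u-h).choose (i-h)) : ℕ) : F)
                  * ((-1:F)^h * ((u.choose h : ℕ) : F) * β m) := by
            intro h hh
            rw [Finset.mem_range] at hh
            rw [IH h hh (by omega)]
          rw [Finset.sum_congr rfl hIH] at hMR
          have hsum : (∑ h ∈ range i, -((((2*u-h).choose (i-h)) : ℕ) : F)
                * ((-1:F)^h * ((u.choose h : ℕ) : F) * β m))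
              = -((∑ h ∈ range i, (-1:F)^h * ((u.choose h : ℕ) : F)
                  * (((2*u-h).choose (i-h) : ℕ) : F)) * β m) := by
            rw [Finset.sum_mul, ← Finset.sum_neg_distrib]
            apply Finset.sum_congr rfl
            intro h _
            ring
          rw [hsum] at hMR
          have hid := aux_L1 (F := F) u (2*u) i (by omega)
          rw [Finset.sum_range_succ, Nat.sub_self, Nat.choose_zero_right] at hid
          have h2uu : 2*u-u = u := by omega
          rw [h2uu, hiodd.neg_one_pow] at hid
          have hkey : β (q+s) * ((2:F) * β (m+i))
              = β (q+s) * ((2:F) * (-((u.choose i : ℕ) : F) * β m)) := by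
            linear_combination hMR - (β m * β (q+s)) * hid
          have hkey2 := mul_left_cancel₀ hstrail hkey
          have hkey3 := mul_left_cancel₀ h2F hkey2
          rw [hkey3, hiodd.neg_one_pow]
          ring
    exact main
end
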